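/- Let $0 < p < 1$ and $L(1/p) = \frac{\log(1+p^2) - \log 2}{2 \log p}$ (the value of $L(x) = \frac{\log((x+p)p)-\log(px+1)}{2\log p}$ at $x = 1/p$). Then $0 < L(1/p) \leq \frac{\log 2}{2 \log(1/p)}$, with $L(1/p) \to \frac{\log 2}{2\log(1/p)} \cdot (1 + o(1))$ as $p \to 0$. -/

import Mathlib

/-- Asymptotic losing probability `L(x)` of a block nurser of relative power `x`. -/
noncomputable def nurseL (p x : ℝ) : ℝ :=
  (Real.log ((x + p) * p) - Real.log (p * x + 1)) / (2 * Real.log p)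

lemma nurseL_eq (p : ℝ) (hp : 0 < p) :
    nurseL p (1 / p) = (Real.log (1 + p ^ 2) - Real.log 2) / (2 * Real.log p) := by
  unfold nurseL
  have h1 : (1 / p + p) * p = 1 + p ^ 2 := by field_simp
  have h2 : p * (1 / p) + 1 = 2 := by field_simp; norm_num
  rw [h1, h2]

/-- `0 < L(1/p) ≤ log 2 / (2 log(1/p))`, with
`L(1/p) = (log 2 / (2 log(1/p)))(1 + o(1))` as `p → 0⁺`. -/
theorem stmt18 :
    (∀ p : ℝ, 0 < p → p < 1 →
      nurseL p (1 / p) = (Real.log (1 + p ^ 2) - Real.log 2) / (2 * Real.log p) ∧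
      0 < nurseL p (1 / p) ∧
      nurseL p (1 / p) ≤ Real.log 2 / (2 * Real.log (1 / p))) ∧
    Filter.Tendsto
      (fun p : ℝ => nurseL p (1 / p) / (Real.log 2 / (2 * Real.log (1 / p))))
      (nhdsWithin 0 (Set.Ioi 0)) (nhds 1) := by
  constructor
  · intro p hp hp1
    have heq := nurseL_eq p hp
    refine ⟨heq, ?_, ?_⟩
    · rw [heq]
      have hnum : Real.log (1 + p ^ 2) - Real.log 2 < 0 := by
        have : Real.log (1 + p ^ 2) < Real.log 2 := by
          apply Real.log_lt_log (by positivity)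
          nlinarith
        linarith
      have hden : 2 * Real.log p < 0 := by
        have := Real.log_neg hp hp1
        linarith
      exact div_pos_of_neg_of_neg hnum hden
    · rw [heq, Real.log_div one_ne_zero (ne_of_gt hp), Real.log_one]
      have hlp : Real.log p < 0 := Real.log_neg hp hp1
      have hd : (0:ℝ) < 2 * (0 - Real.log p) := by linarith
      have hkey : (Real.log (1 + p ^ 2) - Real.log 2) / (2 * Real.log p)
          = (Real.log 2 - Real.log (1 + p ^ 2)) / (2 * (0 - Real.log p)) := by
        rw [div_eq_div_iff (by linarith) (by linarith)]; ring
      rw [hkey]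
      have h1 : 0 ≤ Real.log (1 + p ^ 2) := by
        rw [← Real.log_one]
        exact Real.log_le_log (by norm_num) (by nlinarith)
      gcongr
      linarith
  · have hev : ∀ᶠ p in nhdsWithin (0:ℝ) (Set.Ioi 0),
        nurseL p (1 / p) / (Real.log 2 / (2 * Real.log (1 / p)))
          = 1 - Real.log (1 + p ^ 2) / Real.log 2 := by
      filter_upwards [Ioo_mem_nhdsGT (by norm_num : (0:ℝ) < 1)] with p hp
      obtain ⟨hp0, hp1⟩ := hp
      have hlp : Real.log p < 0 := Real.log_neg hp0 hp1
      have h2 : Real.log 2 ≠ 0 := ne_of_gt (Real.log_pos (by norm_num))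
      rw [nurseL_eq p hp0, Real.log_div one_ne_zero (ne_of_gt hp0), Real.log_one]
      have hlp' : Real.log p ≠ 0 := ne_of_lt hlp
      field_simp
      ring
    rw [Filter.tendsto_congr' hev]
    have hc : ContinuousAt (fun p : ℝ => Real.log (1 + p ^ 2)) 0 :=
      (Real.continuousAt_log (by norm_num)).comp (by fun_prop)
    have hc' : ContinuousAt (fun p : ℝ => 1 - Real.log (1 + p ^ 2) / Real.log 2) 0 :=
      continuousAt_const.sub (hc.div_const _)
    have ht := hc'.tendsto.mono_left (nhdsWithin_le_nhds (s := Set.Ioi (0:ℝ)))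
    simpa using ht
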